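/- In any graph G of independence number at least 2, the set {1, 1+a+b, 1−a−b} (computed in ℤ/nℤ) witnesses: if this set is independent in the circulant graph C_n(a,b), then C_n(a,b) is not W₂. -/

import Mathlib

open SimpleGraph

/-- The circulant graph `C_n(S)` on `ℤ/nℤ`: vertices `i, j` are adjacent iff
`min{|i−j|, n−|i−j|} ∈ S`, i.e. iff `i − j` or `j − i` is congruent mod `n`
to an element of `S ⊆ {1, …, ⌊n/2⌋}`. -/
def circ (n : ℕ) (S : Set ℕ) : SimpleGraph (ZMod n) :=
  SimpleGraph.circulantGraph ((fun s : ℕ => (s : ZMod n)) '' S)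

/-- `s` is an independent set of `G`. -/
def IsIndep {V : Type*} (G : SimpleGraph V) (s : Finset V) : Prop :=
  ∀ ⦃u⦄, u ∈ s → ∀ ⦃w⦄, w ∈ s → ¬ G.Adj u w

/-- The independence number `α(G)`. -/
noncomputable def indepNum {V : Type*} [Fintype V] (G : SimpleGraph V) : ℕ :=
  sSup {k | ∃ s : Finset V, IsIndep G s ∧ s.card = k}

/-- `G` is a W₂ graph: it has at least two vertices and every pair of disjoint
independent sets is contained in a pair of disjoint maximum independent sets. -/
def IsW2 {V : Type*} [Fintype V] (G : SimpleGraph V) : Prop :=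
  2 ≤ Fintype.card V ∧
  ∀ A B : Finset V, IsIndep G A → IsIndep G B → Disjoint A B →
    ∃ A' B' : Finset V, A ⊆ A' ∧ B ⊆ B' ∧ Disjoint A' B' ∧
      IsIndep G A' ∧ IsIndep G B' ∧ A'.card = _root_.indepNum G ∧ B'.card = _root_.indepNum G

/-- The disjoint union of `d` copies of the graph `G`. -/
def copies {V : Type*} (d : ℕ) (G : SimpleGraph V) : SimpleGraph (Fin d × V) where
  Adj p q := p.1 = q.1 ∧ G.Adj p.2 q.2
  symm := ⟨fun p q h => ⟨h.1.symm, h.2.symm⟩⟩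
  loopless := ⟨fun p h => G.loopless.irrefl _ h.2⟩
lemma circ_adj_iff (n a b : ℕ) (x y : ZMod n) :
    (circ n {a, b}).Adj x y ↔
      x ≠ y ∧ (x - y = a ∨ x - y = b ∨ y - x = a ∨ y - x = b) := by
  simp [circ, circulantGraph, fromRel_adj]
  tauto

theorem stmt_16 (n a b : ℕ) [NeZero n] (ha : 1 ≤ a) (hab : a < b)
    (hb : 2 * b < n) (halpha : 2 ≤ _root_.indepNum (circ n {a, b}))
    (hindep : IsIndep (circ n {a, b})
      {(1 : ZMod n), 1 + (a : ZMod n) + (b : ZMod n),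
        1 - (a : ZMod n) - (b : ZMod n)}) :
    ¬ IsW2 (circ n {a, b}) := by
  set G := circ n {a, b} with hG
  rintro ⟨-, hW⟩
  have hcast : ∀ k : ℕ, 0 < k → k < n → (k : ZMod n) ≠ 0 := by
    intro k hk1 hk2 h
    rw [ZMod.natCast_eq_zero_iff] at h
    have := Nat.le_of_dvd hk1 h
    omega
  have ha0 : (a : ZMod n) ≠ 0 := hcast a (by omega) (by omega)
  have hb0 : (b : ZMod n) ≠ 0 := hcast b (by omega) (by omega)
  have hab0 : (a : ZMod n) + b ≠ 0 := by
    have := hcast (a + b) (by omega) (by omega)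
    push_cast at this
    exact this
  -- key adjacencies
  have adj1 : G.Adj (1 + a) (1 + a + b) := by
    rw [hG, circ_adj_iff]
    refine ⟨fun h => hb0 ?_, Or.inr (Or.inr (Or.inr (by ring)))⟩
    linear_combination -h
  have adj2 : G.Adj (1 + b) (1 + a + b) := by
    rw [hG, circ_adj_iff]
    refine ⟨fun h => ha0 ?_, Or.inr (Or.inr (Or.inl (by ring)))⟩
    linear_combination -h
  have adj3 : G.Adj (1 - a) (1 - a - b) := by
    rw [hG, circ_adj_iff]
    refine ⟨fun h => hb0 ?_, Or.inr (Or.inl (by ring))⟩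
    linear_combination h
  have adj4 : G.Adj (1 - b) (1 - a - b) := by
    rw [hG, circ_adj_iff]
    refine ⟨fun h => ha0 ?_, Or.inl (by ring)⟩
    linear_combination h
  -- the two sets
  set A : Finset (ZMod n) := {1} with hA
  set B : Finset (ZMod n) := {1 + (a : ZMod n) + b, 1 - (a : ZMod n) - b} with hB
  have hBsub : B ⊆ ({(1 : ZMod n), 1 + (a : ZMod n) + (b : ZMod n),
      1 - (a : ZMod n) - (b : ZMod n)} : Finset (ZMod n)) := by
    intro x hx
    simp only [hB, Finset.mem_insert, Finset.mem_singleton] at hx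
    rcases hx with rfl | rfl <;> simp
  have hIA : IsIndep G A := by
    intro u hu w hw
    simp only [hA, Finset.mem_singleton] at hu hw
    subst hu; subst hw
    exact G.loopless.irrefl 1
  have hIB : IsIndep G B := fun u hu w hw => hindep (hBsub hu) (hBsub hw)
  have hABdisj : Disjoint A B := by
    simp only [hA, hB, Finset.disjoint_left, Finset.mem_singleton, Finset.mem_insert]
    rintro x rfl h
    rcases h with h | h
    · exact hab0 (by linear_combination -h)
    · exact hab0 (by linear_combination h)
  obtain ⟨A', B', hAA', hBB', hdisj, hIA', hIB', hcA', hcB'⟩ := hW A B hIA hIB hABdisj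
  have h1A' : (1 : ZMod n) ∈ A' := hAA' (by simp [hA])
  have h1B' : (1 : ZMod n) ∉ B' := Finset.disjoint_left.mp hdisj h1A'
  -- B' is maximal: 1 has a neighbor in B'
  have hmax : ∃ w ∈ B', G.Adj 1 w := by
    by_contra h
    push_neg at h
    have hins : IsIndep G (insert 1 B') := by
      intro u hu w hw hadj
      rcases Finset.mem_insert.mp hu with rfl | hu
      · rcases Finset.mem_insert.mp hw with rfl | hw
        · exact G.loopless.irrefl _ hadj
        · exact h w hw hadj
      · rcases Finset.mem_insert.mp hw with rfl | hw
        · exact h u hu hadj.symm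
        · exact hIB' hu hw hadj
    have hmem : (insert 1 B').card ∈ {k | ∃ s : Finset (ZMod n), IsIndep G s ∧ s.card = k} :=
      ⟨_, hins, rfl⟩
    have hbdd : BddAbove {k | ∃ s : Finset (ZMod n), IsIndep G s ∧ s.card = k} := by
      refine ⟨Fintype.card (ZMod n), ?_⟩
      rintro k ⟨s, -, rfl⟩
      exact s.card_le_univ
    have hle : (insert 1 B').card ≤ _root_.indepNum G := le_csSup hbdd hmem
    rw [Finset.card_insert_of_notMem h1B', hcB'] at hle
    omega
  obtain ⟨w, hwB', hadj⟩ := hmax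
  have hP : (1 + (a : ZMod n) + b) ∈ B' := hBB' (by simp [hB])
  have hM : (1 - (a : ZMod n) - b) ∈ B' := hBB' (by simp [hB])
  rw [hG, circ_adj_iff] at hadj
  obtain ⟨-, hcase⟩ := hadj
  rcases hcase with h | h | h | h
  · have : w = 1 - (a : ZMod n) := by linear_combination -h
    exact hIB' hwB' hM (this ▸ adj3)
  · have : w = 1 - (b : ZMod n) := by linear_combination -h
    exact hIB' hwB' hM (this ▸ adj4)
  · have : w = 1 + (a : ZMod n) := by linear_combination h
    exact hIB' hwB' hP (this ▸ adj1)
  · have : w = 1 + (b : ZMod n) := by linear_combination h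
    exact hIB' hwB' hP (this ▸ adj2)
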